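/- (Encoder equivariance, Lemma 2 of the appendix.) Let the function space ℝ^{ℝᵈ} carry the product σ-algebra (MeasurableSpace.pi with the Borel σ-algebra on ℝ). For mean and standard-deviation functions μ : D ↦ (ℝᵈ → ℝ) and σ : D ↦ (ℝᵈ → ℝ≥0) defined on data sets D (lists of pairs in ℝᵈ × ℝ), define the noise-GP encoder E(D) := the infinite product measure ⨂_{x ∈ ℝᵈ} N(μ(D)(x), σ(D)(x)²) on ℝ^{ℝᵈ}, built from real Gaussian measures via the infinite product of probability measures. If μ and σ are translation equivariant as maps into function space, i.e. μ(T_τ D)(x) = μ(D)(x − τ) and σ(T_τ D)(x) = σ(D)(x − τ) for all D, x, τ, then E is translation equivariant as a map to measures: E(T_τ D) = Measure.map T_τ (E(D)) for all D and τ. -/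

import Mathlib

open MeasureTheory ProbabilityTheory
open scoped NNReal

/-- encoder equivariance: let `E` map data sets (lists of pairs in `ℝᵈ × ℝ`)
to the noise-GP measure on `ℝ^{ℝᵈ}`, i.e. for each data set `D`, `E D` is the infinite
product `⨂_{x} N(μ D x, (σ D x)²)` (characterized as the projective limit of its
finite-dimensional product-Gaussian marginals). If the mean and standard-deviation maps
`μ, σ` are translation equivariant, then `E` is translation equivariant as a map to
measures: `E (T_τ D) = Measure.map T_τ (E D)`. -/
theorem encoder_translation_equivariant {d : ℕ}
    (μ : List ((Fin d → ℝ) × ℝ) → (Fin d → ℝ) → ℝ)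
    (σ : List ((Fin d → ℝ) × ℝ) → (Fin d → ℝ) → ℝ≥0)
    (E : List ((Fin d → ℝ) × ℝ) → Measure ((Fin d → ℝ) → ℝ))
    (hE : ∀ D : List ((Fin d → ℝ) × ℝ),
      IsProjectiveLimit (E D) (fun J : Finset (Fin d → ℝ) =>
        Measure.pi fun x : J => gaussianReal (μ D x) (σ D x ^ 2)))
    (hμ : ∀ (D : List ((Fin d → ℝ) × ℝ)) (τ x : Fin d → ℝ),
      μ (D.map fun p => (p.1 + τ, p.2)) x = μ D (x - τ))
    (hσ : ∀ (D : List ((Fin d → ℝ) × ℝ)) (τ x : Fin d → ℝ),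
      σ (D.map fun p => (p.1 + τ, p.2)) x = σ D (x - τ)) :
    ∀ (D : List ((Fin d → ℝ) × ℝ)) (τ : Fin d → ℝ),
      E (D.map fun p => (p.1 + τ, p.2))
        = Measure.map (fun f : (Fin d → ℝ) → ℝ => fun x => f (x - τ)) (E D) := by
  intro D τ
  classical
  set D' := D.map fun p => (p.1 + τ, p.2) with hD'
  set T : ((Fin d → ℝ) → ℝ) → ((Fin d → ℝ) → ℝ) := fun f => fun x => f (x - τ) with hT
  have hTmeas : Measurable T :=
    measurable_pi_lambda _ (fun x => measurable_pi_apply _)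
  -- It suffices to show `Measure.map T (E D)` is a projective limit of the family for `D'`.
  refine IsProjectiveLimit.unique (hE D') ?_
  intro J
  -- the shifted index set
  set J' : Finset (Fin d → ℝ) := J.image (fun x => x - τ) with hJ'
  -- the equivalence `J' ≃ J`, `y ↦ y + τ`
  have hmem₁ : ∀ y : J', (y : Fin d → ℝ) + τ ∈ J := by
    rintro ⟨y, hy⟩
    simp only [hJ', Finset.mem_image] at hy
    obtain ⟨x, hx, rfl⟩ := hy
    simpa [sub_add_cancel] using hx
  have hmem₂ : ∀ x : J, (x : Fin d → ℝ) - τ ∈ J' := by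
    rintro ⟨x, hx⟩
    simp only [hJ', Finset.mem_image]
    exact ⟨x, hx, rfl⟩
  let e : (J' : Type) ≃ (J : Type) :=
    { toFun := fun y => ⟨(y : Fin d → ℝ) + τ, hmem₁ y⟩
      invFun := fun x => ⟨(x : Fin d → ℝ) - τ, hmem₂ x⟩
      left_inv := fun y => by ext : 1; simp
      right_inv := fun x => by ext : 1; simp }
  -- the key factorization of the projection composed with translation
  have hfact : (J.restrict (π := fun _ => ℝ)) ∘ T
      = (MeasurableEquiv.piCongrLeft (fun _ => ℝ) e) ∘ (J'.restrict (π := fun _ => ℝ)) := by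
    funext f
    ext x
    have hx : x = e (e.symm x) := (e.apply_symm_apply x).symm
    rw [Function.comp_apply, Function.comp_apply, hx]
    rw [MeasurableEquiv.coe_piCongrLeft, Equiv.piCongrLeft_apply_apply]
    simp [T, e, Finset.restrict]
  have hrestrict : Measurable (J'.restrict (π := fun _ => ℝ)) :=
    measurable_pi_lambda _ (fun x => measurable_pi_apply _)
  calc ((E D).map T).map (J.restrict)
      = (E D).map ((J.restrict (π := fun _ => ℝ)) ∘ T) := by
        rw [Measure.map_map (J.measurable_restrict (X := fun _ => ℝ)) hTmeas]
    _ = (E D).map ((MeasurableEquiv.piCongrLeft (fun _ => ℝ) e)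
          ∘ (J'.restrict (π := fun _ => ℝ))) := by rw [hfact]
    _ = ((E D).map (J'.restrict)).map (MeasurableEquiv.piCongrLeft (fun _ => ℝ) e) := by
        rw [Measure.map_map (MeasurableEquiv.piCongrLeft (fun _ => ℝ) e).measurable hrestrict]
    _ = (Measure.pi fun y : J' => gaussianReal (μ D y) (σ D y ^ 2)).map
          (MeasurableEquiv.piCongrLeft (fun _ => ℝ) e) := by rw [hE D J']
    _ = (Measure.pi fun y : J' =>
          gaussianReal (μ D' (e y)) (σ D' (e y) ^ 2)).map
          (MeasurableEquiv.piCongrLeft (fun _ => ℝ) e) := by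
        have h2 : (fun y : J' => gaussianReal (μ D y) (σ D y ^ 2))
            = fun y : J' => gaussianReal (μ D' (e y)) (σ D' (e y) ^ 2) := by
          funext y
          have h1 : ((e y : J) : Fin d → ℝ) = (y : Fin d → ℝ) + τ := rfl
          rw [h1, hμ D τ, hσ D τ, add_sub_cancel_right]
        rw [h2]
    _ = Measure.pi fun x : J => gaussianReal (μ D' x) (σ D' x ^ 2) :=
        (measurePreserving_piCongrLeft
          (fun x : J => gaussianReal (μ D' x) (σ D' x ^ 2)) e).map_eq
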